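/- arXiv:2001.00152 — 3 statements merged into one kernel-verified Lean document; each statement's English description precedes it below -/
import Mathlib

section
/- Let P, Q, λ, s, t be nonnegative reals, n a positive integer, and m > d/2 with d ≥ 1. Suppose there exist positive constants a₁, a₂, a₃ such that P² + a₁·λ·Q² ≤ a₂·s·λ·P + a₃·t·n^{-1/2}·P^{1-d/(2m)}·Q^{d/(2m)}. Then there exist positive constants c₁, c₂, c₃, c₄ (depending only on a₁, a₂, a₃, d, m) such that P ≤ max(c₁·s·λ, c₂·t·n^{-1/2}·λ^{-d/(4m)}) and Q ≤ max(c₃·s·λ^{1/2}, c₄·t·n^{-1/2}·λ^{-(2m+d)/(4m)}). -/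
open Real

private lemma sq_rpow_half {x : ℝ} (hx : 0 ≤ x) : (x ^ ((1:ℝ)/2)) ^ 2 = x := by
  rw [← Real.rpow_natCast (x ^ ((1:ℝ)/2)) 2, ← Real.rpow_mul hx]
  norm_num

private lemma le_of_sq_le_sq'' {a b : ℝ} (ha : 0 ≤ a) (hb : 0 ≤ b) (h : a^2 ≤ b^2) :
    a ≤ b := by nlinarith

private lemma le_of_sq_le_mul {r c : ℝ} (hr : 0 ≤ r) (hc : 0 ≤ c) (h : r^2 ≤ c * r) :
    r ≤ c := by
  rcases hr.eq_or_lt with h0 | h0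
  · rw [← h0]; exact hc
  · have := (mul_le_mul_iff_of_pos_right h0).mp (by nlinarith : r * r ≤ c * r)
    exact this

set_option maxHeartbeats 2000000 in
/-- Lemma A.2 (order lemma): algebraic rate-extraction inequality. -/
theorem stmt_0 (d : ℕ) (m a1 a2 a3 : ℝ) (hd : 1 ≤ d) (hm : (d : ℝ) / 2 < m)
    (ha1 : 0 < a1) (ha2 : 0 < a2) (ha3 : 0 < a3) :
    ∃ c1 c2 c3 c4 : ℝ, 0 < c1 ∧ 0 < c2 ∧ 0 < c3 ∧ 0 < c4 ∧
      ∀ (P Q lam s t : ℝ) (n : ℕ), 0 ≤ P → 0 ≤ Q → 0 < lam → 0 ≤ s → 0 ≤ t → 1 ≤ n →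
        P ^ 2 + a1 * lam * Q ^ 2 ≤
          a2 * s * lam * P +
            a3 * t * (n : ℝ) ^ (-(1 / 2 : ℝ)) *
              P ^ (1 - (d : ℝ) / (2 * m)) * Q ^ ((d : ℝ) / (2 * m)) →
        P ≤ max (c1 * s * lam)
              (c2 * t * (n : ℝ) ^ (-(1 / 2 : ℝ)) * lam ^ (-((d : ℝ) / (4 * m)))) ∧
        Q ≤ max (c3 * s * lam ^ ((1 : ℝ) / 2))
              (c4 * t * (n : ℝ) ^ (-(1 / 2 : ℝ)) *
                lam ^ (-((2 * m + (d : ℝ)) / (4 * m)))) := by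
  have hd1 : (1:ℝ) ≤ (d:ℝ) := by exact_mod_cast hd
  have hm0 : 0 < m := by linarith
  set θ : ℝ := (d:ℝ) / (2*m) with hθ
  have hθ0 : 0 < θ := div_pos (by linarith) (by linarith)
  have hθ1 : θ < 1 := by rw [hθ, div_lt_one (by linarith)]; linarith
  have e1 : -((d:ℝ)/(4*m)) = -(θ/2) := by
    rw [hθ, div_div]; ring_nf
  have e2 : -((2*m+(d:ℝ))/(4*m)) = -((1+θ)/2) := by
    rw [hθ, neg_inj, div_eq_div_iff (by positivity) (by norm_num : (2:ℝ) ≠ 0)]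
    field_simp
    ring
  refine ⟨2*a2, 2*a3 * a1 ^ (-(θ/2)), 2*a2 * a1 ^ (-((1:ℝ)/2)), 2*a3 * a1 ^ (-((1+θ)/2)),
    by positivity, by positivity, by positivity, by positivity, ?_⟩
  intro P Q lam s t n hP hQ hlam hs ht hn hineq
  set ν : ℝ := (n:ℝ) ^ (-(1/2:ℝ)) with hν
  have hn0 : (0:ℝ) < (n:ℝ) := by exact_mod_cast Nat.lt_of_lt_of_le Nat.zero_lt_one hn
  have hν0 : 0 < ν := Real.rpow_pos_of_pos hn0 _
  set A : ℝ := a2 * s * lam with hA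
  set B : ℝ := a3 * t * ν with hB
  have hA0 : 0 ≤ A := by positivity
  have hB0 : 0 ≤ B := by positivity
  have hineq' : P ^ 2 + a1 * lam * Q ^ 2 ≤ A * P + B * P ^ (1-θ) * Q ^ θ := hineq
  rcases le_or_gt (B * P ^ (1-θ) * Q ^ θ) (A * P) with hc | hc
  · -- linear term dominates
    have h2 : P ^ 2 + a1 * lam * Q ^ 2 ≤ 2 * (A * P) := by linarith
    have hPA : P ≤ 2*A := by
      have hq : (0:ℝ) ≤ a1 * lam * Q ^ 2 := by positivity
      rcases hP.eq_or_lt with h0 | h0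
      · rw [← h0]; positivity
      · exact (mul_le_mul_iff_of_pos_right h0).mp (by nlinarith : P * P ≤ (2*A) * P)
    constructor
    · refine le_trans ?_ (le_max_left _ _)
      calc P ≤ 2*A := hPA
        _ = 2*a2*s*lam := by rw [hA]; ring
    · refine le_trans ?_ (le_max_left _ _)
      have hq2 : a1 * lam * Q ^ 2 ≤ 4 * A^2 := by
        have h3 : 2 * (A * P) ≤ 2 * (A * (2*A)) := by
          have := mul_le_mul_of_nonneg_left hPA hA0
          linarith
        nlinarith [sq_nonneg P]
      apply le_of_sq_le_sq'' hQ (by positivity)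
      have hrhs : (2*a2 * a1 ^ (-((1:ℝ)/2)) * s * lam ^ ((1:ℝ)/2)) ^ 2
          = 4 * a2^2 * (a1 ^ ((1:ℝ)/2))⁻¹^2 * s^2 * lam := by
        rw [Real.rpow_neg ha1.le]
        rw [mul_pow, mul_pow, mul_pow, sq_rpow_half hlam.le]
        ring
      have h6 : ((a1:ℝ) ^ ((1:ℝ)/2))⁻¹ ^ 2 = a1⁻¹ := by
        rw [inv_pow, sq_rpow_half ha1.le]
      rw [hrhs, h6]
      rw [hA] at hq2
      have h7 : Q^2 ≤ 4*a2^2*s^2*lam/a1 := by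
        rw [le_div_iff₀ ha1]
        nlinarith [hq2, hlam]
      refine h7.trans (le_of_eq ?_)
      field_simp
  · -- nonlinear term dominates
    have h2 : P ^ 2 + a1 * lam * Q ^ 2 ≤ 2 * (B * P ^ (1-θ) * Q ^ θ) := by linarith
    set S : ℝ := P ^ 2 + a1 * lam * Q ^ 2 with hS
    have hS0 : 0 ≤ S := by positivity
    set R : ℝ := S ^ ((1:ℝ)/2) with hR
    have hR0 : 0 ≤ R := Real.rpow_nonneg hS0 _
    have hR2 : R ^ 2 = S := sq_rpow_half hS0
    set w : ℝ := (a1*lam) ^ ((1:ℝ)/2) with hw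
    have hw0 : 0 < w := Real.rpow_pos_of_pos (by positivity) _
    have hPR : P ≤ R := le_of_sq_le_sq'' hP hR0
      (by rw [hR2, hS]; exact le_add_of_nonneg_right (by positivity))
    have hYR : w * Q ≤ R := by
      apply le_of_sq_le_sq'' (by positivity) hR0
      rw [hR2, hS, mul_pow, hw, sq_rpow_half (by positivity : (0:ℝ) ≤ a1*lam)]
      have := sq_nonneg P
      linarith
    have hQw : Q ≤ R / w := (le_div_iff₀ hw0).mpr (by linarith [hYR, mul_comm Q w])
    have hkey : P ^ (1-θ) * Q ^ θ ≤ R / w ^ θ := by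
      have h1 : P ^ (1-θ) ≤ R ^ (1-θ) := Real.rpow_le_rpow hP hPR (by linarith)
      have h2' : Q ^ θ ≤ (R / w) ^ θ := Real.rpow_le_rpow hQ hQw hθ0.le
      have h3 : (R / w) ^ θ = R ^ θ / w ^ θ := Real.div_rpow hR0 hw0.le θ
      have h4 : R ^ (1-θ) * (R ^ θ / w ^ θ) = R / w ^ θ := by
        rw [div_eq_mul_inv, ← mul_assoc, ← Real.rpow_add' hR0 (by norm_num : (1-θ)+θ ≠ 0)]
        norm_num [div_eq_mul_inv]
      calc P ^ (1-θ) * Q ^ θ ≤ R ^ (1-θ) * (R ^ θ / w ^ θ) := by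
            apply mul_le_mul h1 (h3 ▸ h2') (Real.rpow_nonneg hQ θ) (Real.rpow_nonneg hR0 _)
        _ = R / w ^ θ := h4
    set C : ℝ := 2 * B / w ^ θ with hC
    have hC0 : 0 ≤ C := by positivity
    have hRC : R ≤ C := by
      apply le_of_sq_le_mul hR0 hC0
      rw [hR2, hC]
      calc S ≤ 2 * (B * P ^ (1-θ) * Q ^ θ) := h2
        _ ≤ 2 * (B * (R / w ^ θ)) := by
            have := mul_le_mul_of_nonneg_left hkey hB0
            have h5 : B * P ^ (1-θ) * Q ^ θ = B * (P ^ (1-θ) * Q ^ θ) := by ring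
            rw [h5]; linarith
        _ = 2 * B / w ^ θ * R := by ring
    -- identify constants
    have hwθ : w ^ θ = a1 ^ (θ/2) * lam ^ (θ/2) := by
      rw [hw, ← Real.rpow_mul (by positivity : (0:ℝ) ≤ a1*lam),
        Real.mul_rpow ha1.le hlam.le, show (1:ℝ)/2*θ = θ/2 by ring]
    have hw' : w = a1 ^ ((1:ℝ)/2) * lam ^ ((1:ℝ)/2) := by
      rw [hw, Real.mul_rpow ha1.le hlam.le]
    have hCval : C = (2*a3 * a1 ^ (-(θ/2))) * t * ν * lam ^ (-(θ/2)) := by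
      rw [hC, hwθ, hB, Real.rpow_neg ha1.le, Real.rpow_neg hlam.le]
      field_simp
    constructor
    · refine le_trans ?_ (le_max_right _ _)
      rw [e1]
      calc P ≤ R := hPR
        _ ≤ C := hRC
        _ = 2*a3 * a1 ^ (-(θ/2)) * t * ν * lam ^ (-(θ/2)) := hCval
    · refine le_trans ?_ (le_max_right _ _)
      rw [e2]
      have hQC : Q ≤ C / w := by
        rw [le_div_iff₀ hw0]
        calc Q * w = w * Q := mul_comm _ _
          _ ≤ R := hYR
          _ ≤ C := hRC
      refine hQC.trans (le_of_eq ?_)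
      rw [hCval, hw']
      rw [Real.rpow_neg ha1.le, Real.rpow_neg hlam.le, Real.rpow_neg ha1.le, Real.rpow_neg hlam.le,
        show (1+θ)/2 = θ/2 + 1/2 by ring, Real.rpow_add ha1, Real.rpow_add hlam]
      have h1 : (0:ℝ) < a1 ^ (θ/2) := Real.rpow_pos_of_pos ha1 _
      have h2 : (0:ℝ) < a1 ^ ((1:ℝ)/2) := Real.rpow_pos_of_pos ha1 _
      have h3 : (0:ℝ) < lam ^ (θ/2) := Real.rpow_pos_of_pos hlam _
      have h4 : (0:ℝ) < lam ^ ((1:ℝ)/2) := Real.rpow_pos_of_pos hlam _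
      field_simp
      all_goals first | ring1 | (left; ring1)
end

section
/- Let H be a real Hilbert space, let f, f̂ ∈ H, let λ > 0, and let ‖·‖ₙ be a seminorm on a space containing f and f̂ arising from an inner product ⟨·,·⟩ₙ. Suppose the basic inequality ‖f̂ − f‖ₙ² + λ‖f̂‖² ≤ 2⟨e, f̂ − f⟩ₙ + λ‖f‖² holds (where ⟨e, ·⟩ₙ is a fixed linear functional). Suppose furthermore there exists v and a norm ‖·‖_{L₂} such that ⟨f, g⟩ = ⟨v, g⟩_{L₂} for all g ∈ H, where ⟨·,·⟩_{L₂} is an inner product with respect to which ‖·‖_{L₂} is the norm and f̂ − f lies in the L₂ space. Then the improved basic inequality holds: ‖f̂ − f‖ₙ² + λ‖f̂ − f‖² ≤ 2⟨e, f̂ − f⟩ₙ + 2λ‖v‖_{L₂}·‖f̂ − f‖_{L₂}. -/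
open RealInnerProductSpace

/-- The improved basic inequality (2.23), derived abstractly from the basic inequality
and the representation `⟨f, g⟩_H = ⟨v, ι g⟩_{L₂}`. -/
theorem stmt_7 {H L2 : Type*} [NormedAddCommGroup H] [InnerProductSpace ℝ H]
    [NormedAddCommGroup L2] [InnerProductSpace ℝ L2]
    (ι : H →ₗ[ℝ] L2) (N : H → ℝ) (E : H →ₗ[ℝ] ℝ) (f fhat : H) (v : L2)
    (lam : ℝ) (hlam : 0 < lam)
    (hrep : ∀ g : H, ⟪f, g⟫ = ⟪v, ι g⟫)
    (hbasic : N (fhat - f) ^ 2 + lam * ‖fhat‖ ^ 2 ≤ 2 * E (fhat - f) + lam * ‖f‖ ^ 2) :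
    N (fhat - f) ^ 2 + lam * ‖fhat - f‖ ^ 2 ≤
      2 * E (fhat - f) + 2 * lam * ‖v‖ * ‖ι (fhat - f)‖ := by
  have hexp : ‖fhat‖ ^ 2 = ‖f‖ ^ 2 + 2 * ⟪f, fhat - f⟫ + ‖fhat - f‖ ^ 2 := by
    have h := @norm_add_sq_real _ _ _ f (fhat - f)
    simpa using h
  have hcs : -(‖v‖ * ‖ι (fhat - f)‖) ≤ ⟪f, fhat - f⟫ := by
    rw [hrep]
    have := abs_real_inner_le_norm v (ι (fhat - f))
    cases abs_le.mp this with
    | intro h1 h2 => linarith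
  nlinarith [hbasic, hexp, hcs]
end

section
/- Let H be a real Hilbert space, Ω a measure space with L²(Ω) containing H-elements via a linear embedding ι, and suppose f ∈ H satisfies ⟨f, g⟩_H = ⟨v, ι(g)⟩_{L²} for all g ∈ H, for some fixed v ∈ L²(Ω). Let s ∈ H satisfy the orthogonality condition ⟨f − s, s⟩_H = 0 and the sampling inequality ‖ι(f − s)‖_{L²} ≤ ε·‖f − s‖_H for some ε > 0. Then ‖f − s‖_{L²} ≤ ε²·‖v‖_{L²} and ‖f − s‖_H ≤ ε·‖v‖_{L²}. -/
open RealInnerProductSpace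

/-- Abstract improved interpolation error bound (Section 2.3). -/
theorem stmt_12 {H L2 : Type*} [NormedAddCommGroup H] [InnerProductSpace ℝ H]
    [NormedAddCommGroup L2] [InnerProductSpace ℝ L2] [CompleteSpace H]
    (ι : H →ₗ[ℝ] L2) (f s : H) (v : L2) (ε : ℝ) (hε : 0 < ε)
    (hrep : ∀ g : H, ⟪f, g⟫ = ⟪v, ι g⟫)
    (horth : ⟪f - s, s⟫ = 0)
    (hsamp : ‖ι (f - s)‖ ≤ ε * ‖f - s‖) :
    ‖ι (f - s)‖ ≤ ε ^ 2 * ‖v‖ ∧ ‖f - s‖ ≤ ε * ‖v‖ := by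
  have key : ‖f - s‖ ^ 2 = ⟪v, ι (f - s)⟫ := by
    have h1 : ⟪f - s, f - s⟫ = ⟪f - s, f⟫ := by
      rw [inner_sub_right, horth]; ring
    have h2 : ⟪f - s, f⟫ = ⟪f, f - s⟫ := real_inner_comm _ _
    rw [← real_inner_self_eq_norm_sq, h1, h2, hrep]
  have hH : ‖f - s‖ ≤ ε * ‖v‖ := by
    have hcs : ⟪v, ι (f - s)⟫ ≤ ‖v‖ * ‖ι (f - s)‖ := real_inner_le_norm _ _
    have : ‖f - s‖ ^ 2 ≤ ‖v‖ * (ε * ‖f - s‖) := by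
      calc ‖f - s‖ ^ 2 = ⟪v, ι (f - s)⟫ := key
        _ ≤ ‖v‖ * ‖ι (f - s)‖ := hcs
        _ ≤ ‖v‖ * (ε * ‖f - s‖) := by
            exact mul_le_mul_of_nonneg_left hsamp (norm_nonneg _)
    rcases eq_or_lt_of_le (norm_nonneg (f - s)) with h0 | h0
    · rw [← h0]; positivity
    · nlinarith
  refine ⟨?_, hH⟩
  calc ‖ι (f - s)‖ ≤ ε * ‖f - s‖ := hsamp
    _ ≤ ε * (ε * ‖v‖) := by exact mul_le_mul_of_nonneg_left hH hε.le
    _ = ε ^ 2 * ‖v‖ := by ring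
end
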